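/- Let f, f̂ : X → ℝ be measurable with g(x) = 1{f(x) ≥ 0} and ĝ(x) = 1{f̂(x) ≥ 0}. Suppose there exist C > 0 and α > 0 such that P(|f(X)| ≤ t) ≤ C·t^α for all t > 0 (margin condition). Then E[|ĝ(X) − g(X)|·|f(X)|] ≤ C·‖f − f̂‖_∞^{1+α}, where ‖f − f̂‖_∞ = sup_x |f(x) − f̂(x)|. -/

import Mathlib

open MeasureTheory ProbabilityTheory

noncomputable def Pr {Ω : Type*} [MeasurableSpace Ω] (μ : Measure Ω) (s : Set Ω) : ℝ :=
  (μ s).toReal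

noncomputable def cPr {Ω : Type*} [MeasurableSpace Ω] (μ : Measure Ω) (s t : Set Ω) : ℝ :=
  Pr μ (s ∩ t) / Pr μ t

/-- Margin-condition lemma (Audibert–Tsybakov style): the
plug-in classifier excess term is bounded by the sup-norm error raised to the
power 1 + α. -/
theorem stmt19 {Ω 𝒳 : Type*} [MeasurableSpace Ω] [MeasurableSpace 𝒳] [Nonempty 𝒳]
    (μ : Measure Ω) [IsProbabilityMeasure μ]
    (X : Ω → 𝒳) (hX : Measurable X)
    (f fhat : 𝒳 → ℝ) (hf : Measurable f) (hfhat : Measurable fhat)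
    (g ghat : 𝒳 → ℝ)
    (hg : ∀ x, g x = if 0 ≤ f x then (1:ℝ) else 0)
    (hghat : ∀ x, ghat x = if 0 ≤ fhat x then (1:ℝ) else 0)
    (C α : ℝ) (hC : 0 < C) (hα : 0 < α)
    (hbdd : BddAbove (Set.range fun x => |f x - fhat x|))
    (hmargin : ∀ t : ℝ, 0 < t → (μ {ω | |f (X ω)| ≤ t}).toReal ≤ C * t ^ α) :
    ∫ ω, |ghat (X ω) - g (X ω)| * |f (X ω)| ∂μ
      ≤ C * (⨆ x, |f x - fhat x|) ^ (1 + α) := by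
  set M := ⨆ x, |f x - fhat x| with hM
  have hle : ∀ x, |f x - fhat x| ≤ M := fun x =>
    le_ciSup hbdd x
  have hM0 : 0 ≤ M := le_trans (abs_nonneg _) (hle (Classical.arbitrary 𝒳))
  have key : ∀ x, ghat x ≠ g x → |f x| ≤ M := by
    intro x hne
    refine le_trans ?_ (hle x)
    rw [hg, hghat] at hne
    by_cases h1 : 0 ≤ f x <;> by_cases h2 : 0 ≤ fhat x <;>
      simp [h1, h2] at hne ⊢
    · rw [abs_of_nonneg h1, abs_of_nonneg (by linarith [lt_of_not_ge h2])]
      linarith [lt_of_not_ge h2]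
    · rw [abs_of_neg (lt_of_not_ge h1), abs_of_nonpos (by linarith [lt_of_not_ge h1])]
      linarith
  rcases eq_or_lt_of_le hM0 with hMz | hMpos
  · -- M = 0 : f = fhat, integrand is 0
    have hfe : ∀ x, f x = fhat x := by
      intro x
      have h1 := hle x
      rw [← hMz] at h1
      have h2 := abs_nonneg (f x - fhat x)
      have : |f x - fhat x| = 0 := le_antisymm h1 h2
      have := abs_eq_zero.mp this
      linarith
    have hzero : ∀ ω, |ghat (X ω) - g (X ω)| * |f (X ω)| = 0 := by
      intro ω
      rw [hg, hghat, hfe]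
      simp
    calc ∫ ω, |ghat (X ω) - g (X ω)| * |f (X ω)| ∂μ
        = ∫ _ω, (0:ℝ) ∂μ := by
          exact integral_congr_ae (Filter.Eventually.of_forall hzero)
      _ = 0 := integral_zero _ _
      _ ≤ C * M ^ (1 + α) := by positivity
  · -- M > 0
    set s : Set Ω := {ω | |f (X ω)| ≤ M} with hs
    have hsm : MeasurableSet s := (hf.comp hX).abs measurableSet_Iic
    have hptw : ∀ ω, |ghat (X ω) - g (X ω)| * |f (X ω)| ≤ s.indicator (fun _ => M) ω := by
      intro ω
      by_cases hne : ghat (X ω) = g (X ω)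
      · rw [hne]
        simp only [sub_self, abs_zero, zero_mul]
        exact Set.indicator_nonneg (fun _ _ => hM0) ω
      · have hmem : ω ∈ s := key (X ω) hne
        rw [Set.indicator_of_mem hmem]
        have habs : |ghat (X ω) - g (X ω)| ≤ 1 := by
          rw [hg, hghat]
          by_cases h1 : 0 ≤ f (X ω) <;> by_cases h2 : 0 ≤ fhat (X ω) <;>
            simp [h1, h2]
        calc |ghat (X ω) - g (X ω)| * |f (X ω)| ≤ 1 * |f (X ω)| :=
              mul_le_mul_of_nonneg_right habs (abs_nonneg _)
          _ = |f (X ω)| := one_mul _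
          _ ≤ M := key (X ω) hne
    have hint : Integrable (s.indicator fun _ => M) μ :=
      (integrable_const M).indicator hsm
    have hmono : ∫ ω, |ghat (X ω) - g (X ω)| * |f (X ω)| ∂μ
        ≤ ∫ ω, s.indicator (fun _ => M) ω ∂μ :=
      integral_mono_of_nonneg
        (Filter.Eventually.of_forall fun ω => mul_nonneg (abs_nonneg _) (abs_nonneg _))
        hint (Filter.Eventually.of_forall hptw)
    have hval : ∫ ω, s.indicator (fun _ => M) ω ∂μ = (μ s).toReal * M := by
      rw [integral_indicator_const M hsm, smul_eq_mul]
      rfl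
    have hmeas : (μ s).toReal ≤ C * M ^ α := hmargin M hMpos
    have hMα : (0:ℝ) ≤ M ^ α := Real.rpow_nonneg hM0 α
    calc ∫ ω, |ghat (X ω) - g (X ω)| * |f (X ω)| ∂μ
        ≤ (μ s).toReal * M := hmono.trans_eq hval
      _ ≤ (C * M ^ α) * M := mul_le_mul_of_nonneg_right hmeas hM0
      _ = C * M ^ (1 + α) := by
          rw [Real.rpow_add hMpos, Real.rpow_one]
          ring
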